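/- Let h(z) = ∑_{k=0}^∞ a_k z^k and g(z) = ∑_{k=0}^∞ b_k z^k be analytic functions on the unit disk 𝔻 satisfying |h(z)| + |g(z)| ≤ 1 for all z ∈ 𝔻. Then for every integer n ≥ 1, √(|a_n|² + |b_n|²) ≤ 1 − |a_0|² − |b_0|². -/

import Mathlib

open Complex Metric Set Filter

private lemma hasFPS (c : ℕ → ℂ) (f : ℂ → ℂ)
    (hf : ∀ z : ℂ, ‖z‖ < 1 → HasSum (fun k : ℕ => c k * z ^ k) (f z)) :
    HasFPowerSeriesOnBall f (FormalMultilinearSeries.ofScalars ℂ c) 0 1 := by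
  constructor
  · apply ENNReal.le_of_forall_nnreal_lt
    intro r hr
    have hr1 : (r : ℝ) < 1 := by exact_mod_cast hr
    obtain ⟨t, htr, ht1⟩ := exists_between hr1
    have ht0 : (0:ℝ) ≤ t := le_trans r.2 htr.le
    have hnt : ‖(t:ℂ)‖ = t := by
      simp [Complex.norm_real, _root_.abs_of_nonneg ht0]
    have hsum := hf (t : ℂ) (by rw [hnt]; exact ht1)
    have htend : Filter.Tendsto (fun k => ‖c k * (t:ℂ) ^ k‖) atTop (nhds 0) := by
      simpa using hsum.summable.tendsto_atTop_zero.norm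
    obtain ⟨C, hC⟩ := htend.bddAbove_range
    apply FormalMultilinearSeries.le_radius_of_bound _ C
    intro k
    rw [FormalMultilinearSeries.ofScalars_norm]
    calc ‖c k‖ * (r:ℝ) ^ k ≤ ‖c k‖ * t ^ k := by
          gcongr
      _ = ‖c k * (t:ℂ) ^ k‖ := by rw [norm_mul, norm_pow, hnt]
      _ ≤ C := hC ⟨k, rfl⟩
  · exact one_pos
  · intro y hy
    have hy' : ‖y‖ < 1 := by
      rw [← ENNReal.coe_one, Metric.eball_coe, NNReal.coe_one, mem_ball_zero_iff] at hy
      exact hy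
    have := hf y hy'
    have hcoeff : ∀ n, (FormalMultilinearSeries.ofScalars ℂ c).coeff n = c n := by
      intro n
      have : (1 : Fin n → ℂ) = fun _ => (1:ℂ) := rfl
      rw [FormalMultilinearSeries.coeff, this, FormalMultilinearSeries.ofScalars_apply_eq]
      simp
    simpa [hcoeff, mul_comm] using this

private lemma normSq_mobius (β w : ℂ) :
    Complex.normSq (1 - (starRingEnd ℂ) β * w) - Complex.normSq (w - β)
      = (1 - Complex.normSq β) * (1 - Complex.normSq w) := by
  simp only [Complex.normSq_apply, Complex.sub_re, Complex.sub_im, Complex.mul_re,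
    Complex.mul_im, Complex.one_re, Complex.one_im, Complex.conj_re, Complex.conj_im]
  ring

private lemma mobius_lt_one {β w : ℂ} (hβ : ‖β‖ < 1) (hw : ‖w‖ < 1) :
    ‖(w - β) / (1 - (starRingEnd ℂ) β * w)‖ < 1 := by
  have h1 : Complex.normSq β < 1 := by
    have := Complex.sq_norm β
    nlinarith [norm_nonneg β, hβ]
  have h2 : Complex.normSq w < 1 := by
    have := Complex.sq_norm w
    nlinarith [norm_nonneg w, hw]
  have key := normSq_mobius β w
  have hlt : Complex.normSq (w - β) < Complex.normSq (1 - (starRingEnd ℂ) β * w) := by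
    nlinarith [Complex.normSq_nonneg (w - β)]
  have hden : (1 - (starRingEnd ℂ) β * w) ≠ 0 := by
    intro h0
    rw [h0] at hlt
    simpa using (Complex.normSq_nonneg (w-β)).not_gt (by simpa using hlt)
  rw [norm_div, div_lt_one (norm_pos_iff.mpr hden)]
  rw [Complex.norm_def, Complex.norm_def]
  exact Real.sqrt_lt_sqrt (Complex.normSq_nonneg _) hlt

private lemma ofScalars_coeff (c : ℕ → ℂ) (n : ℕ) :
    (FormalMultilinearSeries.ofScalars ℂ c).coeff n = c n := by
  have h : (1 : Fin n → ℂ) = fun _ => (1:ℂ) := rfl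
  rw [FormalMultilinearSeries.coeff, h, FormalMultilinearSeries.ofScalars_apply_eq]
  simp

example (c : ℕ → ℂ) (f : ℂ → ℂ)
    (hf : ∀ z : ℂ, ‖z‖ < 1 → HasSum (fun k : ℕ => c k * z ^ k) (f z)) :
    f 0 = c 0 := by
  have h1 := hf 0 (by norm_num)
  have h2 : HasSum (fun k : ℕ => c k * (0:ℂ) ^ k) (c 0) := by
    have heq : (fun k : ℕ => c k * (0:ℂ) ^ k) = fun k => if k = 0 then c 0 else 0 := by
      funext k
      rcases eq_or_ne k 0 with rfl | hk
      · simp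
      · simp [zero_pow hk, if_neg hk]
    rw [heq]
    exact hasSum_ite_eq 0 (c 0)
  exact h1.unique h2

private lemma coeff_one_bound (c : ℕ → ℂ) (f : ℂ → ℂ)
    (hf : ∀ z : ℂ, ‖z‖ < 1 → HasSum (fun k : ℕ => c k * z ^ k) (f z))
    (hb : ∀ z : ℂ, ‖z‖ < 1 → ‖f z‖ ≤ 1) :
    ‖c 1‖ ≤ 1 - ‖c 0‖ ^ 2 := by
  have hFPS := hasFPS c f hf
  have hball : Metric.eball (0:ℂ) 1 = Metric.ball (0:ℂ) 1 := by
    rw [show (1:ENNReal) = ((1:NNReal):ENNReal) from rfl, Metric.emetric_ball_nnreal]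
    norm_num
  have hdiff : DifferentiableOn ℂ f (Metric.ball 0 1) := by
    have := hFPS.differentiableOn
    rwa [hball] at this
  have hf0 : f 0 = c 0 := by
    have h1 := hf 0 (by norm_num)
    have h2 : HasSum (fun k : ℕ => c k * (0:ℂ) ^ k) (c 0) := by
      have heq : (fun k : ℕ => c k * (0:ℂ) ^ k) = fun k => if k = 0 then c 0 else 0 := by
        funext k
        rcases eq_or_ne k 0 with rfl | hk
        · simp
        · simp [zero_pow hk, if_neg hk]
      rw [heq]
      exact hasSum_ite_eq 0 (c 0)
    exact h1.unique h2
  have hc0le : ‖c 0‖ ≤ 1 := hf0 ▸ hb 0 (by norm_num)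
  have hfd : HasDerivAt f (c 1) 0 := by
    have hd : deriv f 0 = c 1 := by
      have h := hFPS.hasFPowerSeriesAt.deriv
      rw [h]
      exact ofScalars_coeff c 1
    exact hd ▸ (hFPS.hasFPowerSeriesAt.differentiableAt.hasDerivAt)
  have key : ∀ t : ℝ, t ∈ Ioo (0:ℝ) 1 → t * ‖c 1‖ ≤ 1 - t^2 * ‖c 0‖^2 := by
    intro t ht
    obtain ⟨ht0, ht1⟩ := ht
    set β : ℂ := (t:ℂ) * c 0 with hβdef
    have hβ1 : ‖β‖ < 1 := by
      rw [hβdef, norm_mul, Complex.norm_real, Real.norm_eq_abs, _root_.abs_of_nonneg ht0.le]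
      calc t * ‖c 0‖ ≤ t * 1 := by gcongr
        _ < 1 := by linarith
    have htf : ∀ z : ℂ, ‖z‖ < 1 → ‖(t:ℂ) * f z‖ < 1 := by
      intro z hz
      rw [norm_mul, Complex.norm_real, Real.norm_eq_abs, _root_.abs_of_nonneg ht0.le]
      calc t * ‖f z‖ ≤ t * 1 := by gcongr; exact hb z hz
        _ < 1 := by linarith
    have hden' : ∀ w : ℂ, ‖w‖ < 1 → 1 - (starRingEnd ℂ) β * w ≠ 0 := by
      intro w hw h0
      have h1 : (1:ℂ) = (starRingEnd ℂ) β * w := sub_eq_zero.mp h0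
      have : (1:ℝ) = ‖(starRingEnd ℂ) β * w‖ := by rw [← h1]; simp
      rw [norm_mul, RCLike.norm_conj] at this
      nlinarith [norm_nonneg w, norm_nonneg β]
    set φ : ℂ → ℂ := fun w => (w - β) / (1 - (starRingEnd ℂ) β * w) with hφdef
    set F : ℂ → ℂ := fun z => φ ((t:ℂ) * f z) with hFdef
    have hF0 : F 0 = 0 := by
      have : (t:ℂ) * f 0 = β := by rw [hf0]
      rw [hFdef]
      simp only [this, hφdef, sub_self, zero_div]
    have hFdiff : DifferentiableOn ℂ F (Metric.ball 0 1) := by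
      intro z hz
      have hz' : ‖z‖ < 1 := by simpa using hz
      have h1 : DifferentiableWithinAt ℂ (fun z => (t:ℂ) * f z) (Metric.ball 0 1) z :=
        (hdiff z hz).const_mul _
      have h2 : DifferentiableAt ℂ φ ((t:ℂ) * f z) := by
        apply DifferentiableAt.div
        · exact differentiableAt_id.sub_const β
        · exact (differentiableAt_id.const_mul _).const_sub 1
        · exact hden' _ (htf z hz')
      exact h2.comp_differentiableWithinAt z h1
    have hmaps : MapsTo F (Metric.ball (0:ℂ) 1) (Metric.ball (F 0) 1) := by
      intro z hz
      have hz' : ‖z‖ < 1 := by simpa using hz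
      rw [hF0]
      simp only [Metric.mem_ball, dist_zero_right]
      exact mobius_lt_one hβ1 (htf z hz')
    have hS := Complex.norm_deriv_le_div_of_mapsTo_ball hFdiff (hmaps.mono_right Metric.ball_subset_closedBall) one_pos
    -- compute deriv F 0
    have hnormSqβ : Complex.normSq β = t^2 * ‖c 0‖^2 := by
      rw [hβdef, Complex.normSq_mul, Complex.normSq_ofReal, ← Complex.sq_norm]
      ring
    have hβmul : (starRingEnd ℂ) β * β = (Complex.normSq β : ℂ) := by
      rw [mul_comm, Complex.mul_conj]
    have hden0 : (1 : ℂ) - (starRingEnd ℂ) β * β ≠ 0 := hden' β hβ1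
    have hu : HasDerivAt (fun w : ℂ => w - β) 1 β := (hasDerivAt_id β).sub_const β
    have hv : HasDerivAt (fun w : ℂ => 1 - (starRingEnd ℂ) β * w) (-((starRingEnd ℂ) β)) β := by
      have h := (hasDerivAt_id β).const_mul ((starRingEnd ℂ) β)
      simpa using h.const_sub 1
    have hφd : HasDerivAt φ ((1 - (starRingEnd ℂ) β * β)⁻¹) β := by
      have h := hu.div hv hden0
      rw [sub_self, zero_mul, sub_zero, one_mul, sq, div_mul_eq_div_div, div_self hden0,
        one_div] at h
      exact h
    have htfd : HasDerivAt (fun z => (t:ℂ) * f z) ((t:ℂ) * c 1) 0 := hfd.const_mul _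
    have hcomp : HasDerivAt F ((1 - (starRingEnd ℂ) β * β)⁻¹ * ((t:ℂ) * c 1)) 0 := by
      have hβeq : (t:ℂ) * f 0 = β := by rw [hf0]
      have hφd' : HasDerivAt φ ((1 - (starRingEnd ℂ) β * β)⁻¹) ((t:ℂ) * f 0) := by
        rw [hβeq]; exact hφd
      exact HasDerivAt.comp 0 hφd' htfd
    have hnsq : Complex.normSq β < 1 := by
      have h := Complex.sq_norm β
      nlinarith [norm_nonneg β, hβ1]
    have hpos : (0:ℝ) < 1 - Complex.normSq β := by linarith
    have h1x : (1:ℂ) - (starRingEnd ℂ) β * β = ((1 - Complex.normSq β : ℝ) : ℂ) := by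
      rw [hβmul]; push_cast; ring
    have hnorm : ‖deriv F 0‖ = (1 - Complex.normSq β)⁻¹ * (t * ‖c 1‖) := by
      rw [hcomp.deriv, norm_mul, norm_inv, h1x, norm_mul, Complex.norm_real,
        Complex.norm_real, Real.norm_eq_abs, Real.norm_eq_abs,
        _root_.abs_of_pos hpos, _root_.abs_of_nonneg ht0.le]
    have hS' : (1 - Complex.normSq β)⁻¹ * (t * ‖c 1‖) ≤ 1 := by
      rw [← hnorm]
      simpa using hS
    have hle : t * ‖c 1‖ ≤ 1 - Complex.normSq β := by
      rw [inv_mul_le_iff₀ hpos] at hS'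
      linarith
    rw [hnormSqβ] at hle
    linarith
  -- limit t → 1⁻
  have hlim : Tendsto (fun t : ℝ => 1 - t^2*‖c 0‖^2 - t*‖c 1‖) (nhdsWithin 1 (Iio 1))
      (nhds (1 - ‖c 0‖^2 - ‖c 1‖)) := by
    have hc : ContinuousAt (fun t : ℝ => 1 - t^2*‖c 0‖^2 - t*‖c 1‖) 1 := by fun_prop
    have h2 := hc.tendsto.mono_left (nhdsWithin_le_nhds (s := Iio (1:ℝ)))
    simpa using h2
  have hev : ∀ᶠ t in nhdsWithin (1:ℝ) (Iio 1), 0 ≤ 1 - t^2*‖c 0‖^2 - t*‖c 1‖ := by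
    filter_upwards [Ioo_mem_nhdsLT_of_mem (show (1:ℝ) ∈ Ioc (0:ℝ) 1 by norm_num)] with t ht
    have := key t ht
    linarith
  have := ge_of_tendsto hlim hev
  linarith

private lemma coeff_bound (c : ℕ → ℂ) (f : ℂ → ℂ)
    (hf : ∀ z : ℂ, ‖z‖ < 1 → HasSum (fun k : ℕ => c k * z ^ k) (f z))
    (hb : ∀ z : ℂ, ‖z‖ < 1 → ‖f z‖ ≤ 1) (n : ℕ) (hn : 1 ≤ n) :
    ‖c n‖ ≤ 1 - ‖c 0‖ ^ 2 := by
  have hn0 : n ≠ 0 := by omega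
  have hnpos : (0:ℝ) < n := by exact_mod_cast Nat.pos_of_ne_zero hn0
  have hncz : (n:ℂ) ≠ 0 := Nat.cast_ne_zero.mpr hn0
  set ω : ℂ := Complex.exp (2 * (Real.pi:ℂ) * Complex.I / n) with hω
  have hprim : IsPrimitiveRoot ω n := Complex.isPrimitiveRoot_exp n hn0
  have hωn : ω ^ n = 1 := hprim.pow_eq_one
  have hωnorm : ‖ω‖ = 1 := by
    have hre : (2 * (Real.pi:ℂ) * Complex.I / (n:ℂ)).re = 0 := by
      simp [Complex.div_re]
    rw [hω, Complex.norm_exp, hre, Real.exp_zero]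
  set F : ℂ → ℂ := fun z => (∑ j ∈ Finset.range n, f (ω ^ j * z)) / n with hF
  set G : ℂ → ℂ := fun w => F (w ^ ((n:ℂ)⁻¹)) with hG
  have hroot : ∀ w : ℂ, ‖w‖ < 1 → ‖w ^ ((n:ℂ)⁻¹)‖ < 1 ∧ (w ^ ((n:ℂ)⁻¹)) ^ n = w := by
    intro w hw
    refine ⟨?_, Complex.cpow_nat_inv_pow w hn0⟩
    have hcast : ((n:ℂ))⁻¹ = (((n:ℝ)⁻¹ : ℝ) : ℂ) := by push_cast; ring
    rw [hcast, Complex.norm_cpow_real]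
    exact Real.rpow_lt_one (norm_nonneg w) hw
      (by positivity)
  have hGsum : ∀ w : ℂ, ‖w‖ < 1 → HasSum (fun m : ℕ => c (n * m) * w ^ m) (G w) := by
    intro w hw
    obtain ⟨hz1, hzn⟩ := hroot w hw
    set z : ℂ := w ^ ((n:ℂ)⁻¹) with hz
    have hj : ∀ j : ℕ, ‖ω ^ j * z‖ < 1 := by
      intro j
      rw [norm_mul, norm_pow, hωnorm, one_pow, one_mul]
      exact hz1
    have hsums : HasSum (fun k : ℕ => ∑ j ∈ Finset.range n, c k * (ω ^ j * z) ^ k)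
        (∑ j ∈ Finset.range n, f (ω ^ j * z)) :=
      hasSum_sum fun j _ => hf _ (hj j)
    have hFs : HasSum (fun k : ℕ => (∑ j ∈ Finset.range n, c k * (ω ^ j * z) ^ k) / n)
        (F z) := hsums.div_const _
    have hterm : ∀ k : ℕ, (∑ j ∈ Finset.range n, c k * (ω ^ j * z) ^ k) / (n:ℂ)
        = if n ∣ k then c k * z ^ k else 0 := by
      intro k
      have hsw : ∀ j : ℕ, c k * (ω ^ j * z) ^ k = c k * z ^ k * (ω ^ k) ^ j := by
        intro j
        rw [mul_pow, ← pow_mul, mul_comm j k, pow_mul]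
        ring
      rw [Finset.sum_congr rfl fun j _ => hsw j, ← Finset.mul_sum]
      by_cases hdvd : n ∣ k
      · have hω1 : ω ^ k = 1 := hprim.pow_eq_one_iff_dvd k |>.mpr hdvd
        rw [hω1]
        simp only [one_pow, Finset.sum_const, Finset.card_range, nsmul_eq_mul, mul_one]
        rw [if_pos hdvd]
        field_simp
      · have hne : ω ^ k ≠ 1 := fun h => hdvd ((hprim.pow_eq_one_iff_dvd k).mp h)
        have hzero : ∑ j ∈ Finset.range n, (ω ^ k) ^ j = 0 := by
          rw [geom_sum_eq hne n, ← pow_mul, mul_comm k n, pow_mul, hωn, one_pow,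
            sub_self, zero_div]
        rw [hzero, if_neg hdvd, mul_zero, zero_div]
    have hFs2 : HasSum (fun k : ℕ => if n ∣ k then c k * z ^ k else 0) (F z) := by
      have heq : (fun k : ℕ => (∑ j ∈ Finset.range n, c k * (ω ^ j * z) ^ k) / (n:ℂ))
          = fun k : ℕ => if n ∣ k then c k * z ^ k else 0 := funext hterm
      rwa [heq] at hFs
    have hinj : Function.Injective (fun m : ℕ => n * m) := fun a b hab => by
      simpa [Nat.eq_of_mul_eq_mul_left (Nat.pos_of_ne_zero hn0)] using
        Nat.eq_of_mul_eq_mul_left (Nat.pos_of_ne_zero hn0) hab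
    have hvanish : ∀ k ∉ Set.range (fun m : ℕ => n * m),
        (if n ∣ k then c k * z ^ k else 0) = 0 := by
      intro k hk
      rw [if_neg]
      intro ⟨m, hm⟩
      exact hk ⟨m, hm.symm⟩
    have hcomp := (Function.Injective.hasSum_iff hinj hvanish).mpr hFs2
    have heq2 : ((fun k : ℕ => if n ∣ k then c k * z ^ k else 0) ∘ (fun m : ℕ => n * m))
        = fun m : ℕ => c (n * m) * w ^ m := by
      funext m
      simp only [Function.comp_apply]
      rw [if_pos ⟨m, rfl⟩, pow_mul, hzn]
    rw [heq2] at hcomp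
    exact hcomp
  have hGb : ∀ w : ℂ, ‖w‖ < 1 → ‖G w‖ ≤ 1 := by
    intro w hw
    obtain ⟨hz1, _⟩ := hroot w hw
    set z : ℂ := w ^ ((n:ℂ)⁻¹) with hz
    have hj : ∀ j : ℕ, ‖ω ^ j * z‖ < 1 := by
      intro j
      rw [norm_mul, norm_pow, hωnorm, one_pow, one_mul]
      exact hz1
    have : ‖G w‖ = ‖∑ j ∈ Finset.range n, f (ω ^ j * z)‖ / n := by
      rw [hG]
      simp only [hF]
      rw [norm_div, Complex.norm_natCast]
    rw [this, div_le_one hnpos]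
    calc ‖∑ j ∈ Finset.range n, f (ω ^ j * z)‖ ≤ ∑ j ∈ Finset.range n, ‖f (ω ^ j * z)‖ :=
          norm_sum_le _ _
      _ ≤ ∑ j ∈ Finset.range n, 1 := Finset.sum_le_sum fun j _ => hb _ (hj j)
      _ = n := by simp
  have := coeff_one_bound (fun m => c (n * m)) G hGsum hGb
  simpa using this

/-- Coefficient estimate for pairs: if `h, g` are analytic on the unit disk with
`|h| + |g| ≤ 1`, then `√(|aₙ|² + |bₙ|²) ≤ 1 − |a₀|² − |b₀|²` for all `n ≥ 1`. -/
theorem bohr_pair_coefficient_bound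
    (a b : ℕ → ℂ) (h g : ℂ → ℂ)
    (hh : ∀ z : ℂ, ‖z‖ < 1 → HasSum (fun k : ℕ => a k * z ^ k) (h z))
    (hg : ∀ z : ℂ, ‖z‖ < 1 → HasSum (fun k : ℕ => b k * z ^ k) (g z))
    (hbound : ∀ z : ℂ, ‖z‖ < 1 → ‖h z‖ + ‖g z‖ ≤ 1) :
    ∀ n : ℕ, 1 ≤ n →
      Real.sqrt (‖a n‖ ^ 2 + ‖b n‖ ^ 2) ≤ 1 - ‖a 0‖ ^ 2 - ‖b 0‖ ^ 2 := by
  intro n hn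
  have hsq : ∀ z : ℂ, ‖z‖^2 = Complex.normSq z := fun z => by
    rw [Complex.sq_norm]
  -- choose a unimodular ω making the cross term vanish
  obtain ⟨ω, hω1, hωre⟩ : ∃ ω : ℂ, ‖ω‖ = 1 ∧
      ((starRingEnd ℂ) (a 0) * (ω * b 0)).re = 0 := by
    set u : ℂ := (starRingEnd ℂ) (a 0) * b 0 with hu
    rcases eq_or_ne u 0 with h0 | h0
    · refine ⟨1, norm_one, ?_⟩
      have : (starRingEnd ℂ) (a 0) * (1 * b 0) = u := by rw [hu]; ring
      rw [this, h0, Complex.zero_re]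
    · refine ⟨Complex.I * (starRingEnd ℂ) u / ‖u‖, ?_, ?_⟩
      · rw [norm_div, norm_mul, Complex.norm_I, one_mul, RCLike.norm_conj,
          Complex.norm_real, Real.norm_eq_abs, abs_norm, div_self (norm_ne_zero_iff.mpr h0)]
      · have hstep : (starRingEnd ℂ) (a 0) * (Complex.I * (starRingEnd ℂ) u / ‖u‖ * b 0)
            = Complex.I * ((starRingEnd ℂ) u * u) / (‖u‖ : ℂ) := by
          rw [hu]; ring
        have h2 : (starRingEnd ℂ) u * u = ((Complex.normSq u : ℝ) : ℂ) := by
          rw [mul_comm, Complex.mul_conj]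
        rw [hstep, h2]
        simp [Complex.div_re]
  -- the two auxiliary functions
  have haux : ∀ s : ℂ, ‖s‖ = 1 → ((starRingEnd ℂ) (a 0) * (s * b 0)).re = 0 →
      ‖a n + s * b n‖ ≤ 1 - ‖a 0‖^2 - ‖b 0‖^2 := by
    intro s hs1 hsre
    have hsum : ∀ z : ℂ, ‖z‖ < 1 →
        HasSum (fun k : ℕ => (a k + s * b k) * z ^ k) (h z + s * g z) := by
      intro z hz
      have := (hh z hz).add ((hg z hz).mul_left s)
      have heq : (fun k : ℕ => a k * z ^ k + s * (b k * z ^ k))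
          = fun k : ℕ => (a k + s * b k) * z ^ k := by funext k; ring
      rwa [heq] at this
    have hbd : ∀ z : ℂ, ‖z‖ < 1 → ‖h z + s * g z‖ ≤ 1 := by
      intro z hz
      calc ‖h z + s * g z‖ ≤ ‖h z‖ + ‖s * g z‖ := norm_add_le _ _
        _ = ‖h z‖ + ‖g z‖ := by rw [norm_mul, hs1, one_mul]
        _ ≤ 1 := hbound z hz
    have hres := coeff_bound (fun k => a k + s * b k) (fun z => h z + s * g z) hsum hbd n hn
    have hc0 : ‖a 0 + s * b 0‖^2 = ‖a 0‖^2 + ‖b 0‖^2 := by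
      rw [hsq, hsq, hsq, Complex.normSq_add]
      have h1 : Complex.normSq (s * b 0) = Complex.normSq (b 0) := by
        rw [Complex.normSq_mul]
        have : Complex.normSq s = 1 := by rw [← hsq, hs1]; norm_num
        rw [this, one_mul]
      have h2 : (a 0 * (starRingEnd ℂ) (s * b 0)).re = 0 := by
        have : a 0 * (starRingEnd ℂ) (s * b 0)
            = (starRingEnd ℂ) ((starRingEnd ℂ) (a 0) * (s * b 0)) := by
          simp [map_mul]
        rw [this, Complex.conj_re, hsre]
      rw [h1, h2]
      ring
    rw [hc0] at hres
    convert hres using 1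
    ring
  have h1 := haux ω hω1 hωre
  have h2 := haux (-ω) (by rw [norm_neg, hω1]) (by
    have : (starRingEnd ℂ) (a 0) * (-ω * b 0) = -((starRingEnd ℂ) (a 0) * (ω * b 0)) := by ring
    rw [this, Complex.neg_re, hωre, neg_zero])
  have h2' : ‖a n - ω * b n‖ ≤ 1 - ‖a 0‖^2 - ‖b 0‖^2 := by
    have : a n + -ω * b n = a n - ω * b n := by ring
    rwa [this] at h2
  set D : ℝ := 1 - ‖a 0‖^2 - ‖b 0‖^2 with hD
  have hD0 : 0 ≤ D := le_trans (norm_nonneg _) h1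
  have hpar : ‖a n + ω * b n‖^2 + ‖a n - ω * b n‖^2 = 2 * (‖a n‖^2 + ‖b n‖^2) := by
    rw [hsq, hsq, hsq, hsq]
    have hωb : Complex.normSq (ω * b n) = Complex.normSq (b n) := by
      rw [Complex.normSq_mul]
      have : Complex.normSq ω = 1 := by rw [← hsq, hω1]; norm_num
      rw [this, one_mul]
    rw [← hωb]
    simp only [Complex.normSq_apply, Complex.add_re, Complex.add_im, Complex.sub_re,
      Complex.sub_im]
    ring
  have hsum : ‖a n‖^2 + ‖b n‖^2 ≤ D^2 := by
    nlinarith [norm_nonneg (a n + ω * b n), norm_nonneg (a n - ω * b n), h1, h2']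
  calc Real.sqrt (‖a n‖^2 + ‖b n‖^2) ≤ Real.sqrt (D^2) := Real.sqrt_le_sqrt hsum
    _ = D := by rw [Real.sqrt_sq hD0]
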